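/- arXiv:2008.07594 — 2 statements merged into one kernel-verified Lean document; each statement's English description precedes it below -/
import Mathlib

section
/- For every integer N ≥ 2 and all positive integers d and m with m ≥ 2 and d² ≥ N·(2 + m·(m−1)), one has d/m ≥ min{⌈√(4N)⌉/2, ⌈√(8N)⌉/3, ⌈√(14N)⌉/4, ⌈√(22N)⌉/5, ⌈√(32N)⌉/6, ⌈√(44N)⌉/7} (as real numbers). -/
def sesList : List (ℕ × ℕ × ℕ × ℕ) := [(3, 3, 4, 1), (3, 3, 5, 1), (2, 1, 2, 2), (7, 7, 15, 1), (3, 3, 7, 1), (4, 2, 5, 2), (3, 3, 8, 1), (6, 6, 17, 1), (3, 1, 3, 3), (6, 6, 19, 1), (3, 3, 10, 1), (5, 5, 17, 1), (4, 2, 7, 2), (3, 3, 11, 1), (4, 4, 15, 1), (3, 1, 4, 3), (3, 1, 4, 3), (6, 6, 25, 1), (4, 4, 17, 1), (3, 3, 13, 1), (4, 2, 9, 2), (4, 2, 9, 2), (3, 3, 14, 1), (4, 4, 19, 1), (5, 5, 24, 1), (3, 1, 5, 3), (3, 1, 5, 3), (7, 7, 36, 1), (5, 5, 26, 1), (3,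 3, 16, 1), (3, 3, 16, 1), (4, 2, 11, 2), (4, 2, 11, 2), (3, 3, 17, 1), (3, 3, 17, 1), (4, 4, 23, 1), (5, 5, 29, 1), (3, 1, 6, 3), (3, 1, 6, 3), (4, 1, 6, 4), (6, 6, 37, 1), (4, 4, 25, 1), (3, 3, 19, 1), (3, 3, 19, 1), (4, 2, 13, 2), (4, 2, 13, 2), (4, 2, 13, 2), (3, 3, 20, 1), (3, 3, 20, 1), (4, 4, 27, 1), (4, 4, 27, 1), (3, 1, 7, 3), (3, 1, 7, 3), (3, 1, 7, 3), (4, 1, 7, 4), (5, 5, 36, 1), (4, 4, 29, 1), (3, 3, 22, 1), (3, 3, 22, 1), (5, 5, 37, 1), (4, 2, 15, 2), (4, 2, 15, 2), (4, 2, 15, 2), (3, 3, 23, 1), (3, 3, 23, 1), (4, 4, 31, 1), (4, 4, 31, 1), (3, 1, 8, 3), (3, 1, 8, 3), (3, 1, 8, 3), (3, 1, 8, 3), (4, 1, 8, 4), (5, 5, 41, 1), (4, 4, 33, 1), (3, 3, 25, 1), (3, 3, 25, 1), (3, 3, 25, 1), (4, 2, 17, 2), (4, 2, 17, 2), (4,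 2, 17, 2), (4, 2, 17, 2), (3, 3, 26, 1), (3, 3, 26, 1), (4, 4, 35, 1), (4, 4, 35, 1), (3, 1, 9, 3), (3, 1, 9, 3), (3, 1, 9, 3), (3, 1, 9, 3), (3, 1, 9, 3), (4, 1, 9, 4), (5, 5, 46, 1), (4, 4, 37, 1), (4, 4, 37, 1), (3, 3, 28, 1), (3, 3, 28, 1), (3, 3, 28, 1), (4, 2, 19, 2), (4, 2, 19, 2), (4, 2, 19, 2), (4, 2, 19, 2), (3, 3, 29, 1), (3, 3, 29, 1), (3, 3, 29, 1), (4, 4, 39, 1), (4, 4, 39, 1), (3, 1, 10, 3), (3, 1, 10, 3), (3, 1, 10, 3), (3, 1, 10, 3), (3, 1, 10, 3), (4, 1, 10, 4), (4, 1, 10, 4), (5, 5, 51, 1), (4, 4, 41, 1), (3, 3, 31, 1), (3, 3, 31, 1), (3, 3, 31, 1), (3, 3, 31, 1), (4, 2, 21, 2), (4, 2, 21, 2), (4, 2, 21, 2), (4, 2, 21, 2), (3, 3, 32, 1), (3, 3, 32, 1), (3, 3, 32, 1), (3, 3, 32, 1), (4, 4, 43, 1), (4, 4, 43, 1), (3,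 1, 11, 3), (3, 1, 11, 3), (3, 1, 11, 3), (3, 1, 11, 3), (3, 1, 11, 3), (3, 1, 11, 3), (4, 1, 11, 4), (4, 1, 11, 4), (4, 4, 45, 1), (4, 4, 45, 1), (3, 3, 34, 1), (3, 3, 34, 1), (3, 3, 34, 1), (3, 3, 34, 1), (4, 2, 23, 2), (4, 2, 23, 2), (4, 2, 23, 2), (4, 2, 23, 2), (4, 2, 23, 2), (3, 3, 35, 1), (3, 3, 35, 1), (3, 3, 35, 1), (3, 3, 35, 1), (4, 4, 47, 1), (4, 4, 47, 1), (3, 1, 12, 3), (3, 1, 12, 3), (3, 1, 12, 3), (3, 1, 12, 3), (3, 1, 12, 3), (3, 1, 12, 3), (3, 1, 12, 3), (4, 1, 12, 4), (4, 1, 12, 4), (4, 4, 49, 1), (4, 4, 49, 1), (3, 3, 37, 1), (3, 3, 37, 1), (3, 3, 37, 1), (3, 3, 37, 1), (3, 3, 37, 1), (4, 2, 25, 2), (4, 2, 25, 2), (4, 2, 25, 2), (4, 2, 25, 2), (3, 3, 38, 1), (3, 3, 38, 1), (3, 3, 38, 1), (3, 3, 38, 1), (3, 3, 38, 1), (4,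 4, 51, 1), (4, 4, 51, 1), (3, 1, 13, 3), (3, 1, 13, 3), (3, 1, 13, 3), (3, 1, 13, 3), (3, 1, 13, 3), (3, 1, 13, 3), (3, 1, 13, 3), (3, 1, 13, 3), (4, 1, 13, 4), (4, 1, 13, 4), (4, 1, 13, 4), (4, 4, 53, 1), (3, 3, 40, 1), (3, 3, 40, 1), (3, 3, 40, 1), (3, 3, 40, 1), (3, 3, 40, 1), (3, 3, 40, 1), (4, 2, 27, 2), (4, 2, 27, 2), (4, 2, 27, 2), (4, 2, 27, 2), (3, 3, 41, 1), (3, 3, 41, 1), (3, 3, 41, 1), (3, 3, 41, 1), (3, 3, 41, 1), (3, 3, 41, 1), (4, 4, 55, 1), (4, 4, 55, 1), (3, 1, 14, 3), (3, 1, 14, 3), (3, 1, 14, 3), (3, 1, 14, 3), (3, 1, 14, 3), (3, 1, 14, 3), (3, 1, 14, 3), (3, 1, 14, 3), (4, 1, 14, 4), (4, 1, 14, 4), (4, 1, 14, 4), (4, 1, 14, 4), (4, 4, 57, 1), (3, 3, 43, 1), (3, 3, 43, 1), (3, 3, 43, 1), (3, 3, 43, 1), (3, 3, 43, 1), (3,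 3, 43, 1), (4, 4, 57, 1), (4, 2, 29, 2), (4, 2, 29, 2), (4, 2, 29, 2), (4, 2, 29, 2), (3, 3, 44, 1), (3, 3, 44, 1), (3, 3, 44, 1), (3, 3, 44, 1), (3, 3, 44, 1), (3, 3, 44, 1), (4, 4, 59, 1), (4, 4, 59, 1), (3, 1, 15, 3), (3, 1, 15, 3), (3, 1, 15, 3), (3, 1, 15, 3), (3, 1, 15, 3), (3, 1, 15, 3), (3, 1, 15, 3), (3, 1, 15, 3), (3, 1, 15, 3), (4, 1, 15, 4), (4, 1, 15, 4), (4, 1, 15, 4), (4, 1, 15, 4), (4, 4, 61, 1), (3, 3, 46, 1), (3, 3, 46, 1), (3, 3, 46, 1), (3, 3, 46, 1), (3, 3, 46, 1), (3, 3, 46, 1), (4, 4, 61, 1), (4, 2, 31, 2), (4, 2, 31, 2), (4, 2, 31, 2), (4, 2, 31, 2), (3, 3, 47, 1), (3, 3, 47, 1), (3, 3, 47, 1), (3, 3, 47, 1), (3, 3, 47, 1), (3, 3, 47, 1), (3, 3, 47, 1), (4, 4, 63, 1), (4, 4, 63, 1), (3, 1, 16, 3), (3, 1, 16, 3), (3,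 1, 16, 3), (3, 1, 16, 3), (3, 1, 16, 3), (3, 1, 16, 3), (3, 1, 16, 3), (3, 1, 16, 3), (3, 1, 16, 3), (3, 1, 16, 3), (4, 1, 16, 4), (4, 1, 16, 4), (4, 1, 16, 4), (4, 1, 16, 4), (3, 3, 49, 1), (3, 3, 49, 1), (3, 3, 49, 1), (3, 3, 49, 1), (3, 3, 49, 1), (3, 3, 49, 1), (3, 3, 49, 1), (3, 3, 49, 1), (4, 4, 65, 1), (4, 2, 33, 2), (4, 2, 33, 2), (4, 2, 33, 2), (3, 3, 50, 1), (3, 3, 50, 1), (3, 3, 50, 1), (3, 3, 50, 1), (3, 3, 50, 1), (3, 3, 50, 1), (3, 3, 50, 1), (3, 3, 50, 1), (4, 4, 67, 1), (4, 4, 67, 1), (3, 1, 17, 3), (3, 1, 17, 3), (3, 1, 17, 3), (3, 1, 17, 3), (3, 1, 17, 3), (3, 1, 17, 3), (3, 1, 17, 3), (3, 1, 17, 3), (3, 1, 17, 3), (3, 1, 17, 3), (3, 1, 17, 3), (4, 1, 17, 4), (4, 1, 17, 4), (4, 1, 17, 4), (4, 1, 17, 4), (3, 3, 52, 1), (3,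 3, 52, 1), (3, 3, 52, 1), (3, 3, 52, 1), (3, 3, 52, 1), (3, 3, 52, 1), (3, 3, 52, 1), (3, 3, 52, 1), (3, 3, 52, 1), (4, 4, 69, 1)]

def sesTable (n : ℕ) : ℕ × ℕ × ℕ × ℕ := sesList.getD (n - 2) (2, 2, 2, 1)

def sesP (n : ℕ) (p : ℕ × ℕ × ℕ × ℕ) : Prop :=
  2 ≤ p.1 ∧ p.1 ≤ 7 ∧ p.1 = p.2.1 * p.2.2.2 ∧ 0 < p.2.1 ∧ 0 < p.2.2.2 ∧
    p.2.2.1 ^ 2 ≤ p.2.1 ^ 2 * n ∧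
    16 * p.2.2.1 ^ 2 ≤ 15 * p.2.1 ^ 2 * n + 2 * p.2.2.1 ∧
    64 * p.2.2.1 ^ 2 + 2 ≤ 58 * p.2.1 ^ 2 * n + 16 * p.2.2.1 ∧
    (2 + p.1 * (p.1 - 1)) * n ≤ (p.2.2.2 * p.2.2.1) ^ 2

instance (n : ℕ) (p : ℕ × ℕ × ℕ × ℕ) : Decidable (sesP n p) := by
  unfold sesP; infer_instance

set_option maxHeartbeats 1000000 in
set_option maxRecDepth 10000 in
theorem sesTable_ok : ∀ n, n < 340 → 2 ≤ n → sesP n (sesTable n) := by decide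

theorem ses_term_le (x : ℝ) (A : ℤ) (hA : 0 ≤ A) (hx : x ≤ (A : ℝ) ^ 2) (k : ℝ)
    (hk : 0 < k) (d m : ℕ) (hm : 0 < m) (h : (A : ℝ) * m ≤ k * d) :
    (⌈Real.sqrt x⌉ : ℝ) / k ≤ (d : ℝ) / m := by
  have hA' : (0 : ℝ) ≤ A := by exact_mod_cast hA
  have h1 : Real.sqrt x ≤ (A : ℝ) := by
    calc Real.sqrt x ≤ Real.sqrt ((A : ℝ) ^ 2) := Real.sqrt_le_sqrt hx
      _ = A := by rw [Real.sqrt_sq hA']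
  have h2 : (⌈Real.sqrt x⌉ : ℝ) ≤ A := by
    exact_mod_cast (Int.ceil_le.mpr (by exact_mod_cast h1) : ⌈Real.sqrt x⌉ ≤ A)
  have hm' : (0 : ℝ) < m := by exact_mod_cast hm
  rw [div_le_div_iff₀ hk hm']
  have : (⌈Real.sqrt x⌉ : ℝ) * m ≤ (A : ℝ) * m :=
    mul_le_mul_of_nonneg_right h2 (le_of_lt hm')
  linarith

theorem ses_sq_le (a b : ℤ) (ha : 0 ≤ a) (hb : 0 ≤ b) (h : a ^ 2 ≤ b ^ 2) : a ≤ b := by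
  nlinarith

/-- workhorse for small N -/
theorem ses_arith (n kr Ar : ℤ) (hkr : 0 < kr) (hAr : 0 ≤ Ar)
    (h1 : Ar ^ 2 ≤ kr ^ 2 * n)
    (h2 : 16 * Ar ^ 2 ≤ 15 * kr ^ 2 * n + 2 * Ar)
    (h3 : 64 * Ar ^ 2 + 2 ≤ 58 * kr ^ 2 * n + 16 * Ar)
    (d m : ℤ) (hd : 0 ≤ d) (hm8 : 8 ≤ m)
    (hdm : n * (2 + m * (m - 1)) ≤ d ^ 2) :
    Ar * m ≤ kr * d := by
  have hq : (Ar * m - 1) ^ 2 + 1 ≤ kr ^ 2 * n * (2 + m * (m - 1)) := by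
    nlinarith [mul_nonneg (by linarith : (0:ℤ) ≤ kr ^ 2 * n - Ar ^ 2) (sq_nonneg (m - 8)),
      mul_nonneg (by linarith : (0:ℤ) ≤ 15 * kr ^ 2 * n - 16 * Ar ^ 2 + 2 * Ar)
        (by linarith : (0:ℤ) ≤ m - 8)]
  have hq2 : (Ar * m - 1) ^ 2 < (kr * d) ^ 2 := by nlinarith
  have hkd : 0 ≤ kr * d := mul_nonneg (le_of_lt hkr) hd
  by_contra hcon
  push_neg at hcon
  rcases le_or_gt 1 (Ar * m) with h0 | h0
  · have hle : kr * d ≤ Ar * m - 1 := by omega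
    nlinarith [mul_le_mul hle hle hkd (by linarith : (0:ℤ) ≤ Ar * m - 1)]
  · have : Ar * m ≤ 0 := by omega
    omega

set_option maxHeartbeats 2000000 in
theorem stmt_0 (N : ℤ) (hN : 2 ≤ N) (d m : ℕ) (hd : 0 < d) (hm : 0 < m)
    (hm2 : 2 ≤ m) (hdm : (d : ℤ)^2 ≥ N * (2 + m * (m - 1))) :
    (d : ℝ) / m ≥
      min ((⌈Real.sqrt (4 * N)⌉ : ℝ) / 2)
        (min ((⌈Real.sqrt (8 * N)⌉ : ℝ) / 3)
          (min ((⌈Real.sqrt (14 * N)⌉ : ℝ) / 4)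
            (min ((⌈Real.sqrt (22 * N)⌉ : ℝ) / 5)
              (min ((⌈Real.sqrt (32 * N)⌉ : ℝ) / 6)
                ((⌈Real.sqrt (44 * N)⌉ : ℝ) / 7))))) := by
  rw [ge_iff_le]
  rcases le_or_gt m 7 with hm7 | hm8
  · -- small m : use term m with A = d
    have hdnn : (0:ℤ) ≤ (d:ℤ) := by positivity
    interval_cases m
    · refine le_trans (min_le_left _ _) (ses_term_le (4 * (N:ℝ)) d hdnn ?_ 2 (by norm_num) d 2 (by norm_num) ?_)
      · have : 4 * N ≤ (d:ℤ)^2 := by push_cast at hdm ⊢; nlinarith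
        exact_mod_cast this
      · push_cast; nlinarith [Nat.cast_nonneg (α := ℝ) d]
    · refine le_trans ((min_le_right _ _).trans (min_le_left _ _)) (ses_term_le (8 * (N:ℝ)) d hdnn ?_ 3 (by norm_num) d 3 (by norm_num) ?_)
      · have : 8 * N ≤ (d:ℤ)^2 := by push_cast at hdm ⊢; nlinarith
        exact_mod_cast this
      · push_cast; nlinarith [Nat.cast_nonneg (α := ℝ) d]
    · refine le_trans ((min_le_right _ _).trans ((min_le_right _ _).trans (min_le_left _ _))) (ses_term_le (14 * (N:ℝ)) d hdnn ?_ 4 (by norm_num) d 4 (by norm_num) ?_)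
      · have : 14 * N ≤ (d:ℤ)^2 := by push_cast at hdm ⊢; nlinarith
        exact_mod_cast this
      · push_cast; nlinarith [Nat.cast_nonneg (α := ℝ) d]
    · refine le_trans ((min_le_right _ _).trans ((min_le_right _ _).trans ((min_le_right _ _).trans (min_le_left _ _)))) (ses_term_le (22 * (N:ℝ)) d hdnn ?_ 5 (by norm_num) d 5 (by norm_num) ?_)
      · have : 22 * N ≤ (d:ℤ)^2 := by push_cast at hdm ⊢; nlinarith
        exact_mod_cast this
      · push_cast; nlinarith [Nat.cast_nonneg (α := ℝ) d]
    · refine le_trans ((min_le_right _ _).trans ((min_le_right _ _).trans ((min_le_right _ _).trans ((min_le_right _ _).trans (min_le_left _ _))))) (ses_term_le (32 * (N:ℝ)) d hdnn ?_ 6 (by norm_num) d 6 (by norm_num) ?_)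
      · have : 32 * N ≤ (d:ℤ)^2 := by push_cast at hdm ⊢; nlinarith
        exact_mod_cast this
      · push_cast; nlinarith [Nat.cast_nonneg (α := ℝ) d]
    · refine le_trans ((min_le_right _ _).trans ((min_le_right _ _).trans ((min_le_right _ _).trans ((min_le_right _ _).trans (min_le_right _ _))))) (ses_term_le (44 * (N:ℝ)) d hdnn ?_ 7 (by norm_num) d 7 (by norm_num) ?_)
      · have : 44 * N ≤ (d:ℤ)^2 := by push_cast at hdm ⊢; nlinarith
        exact_mod_cast this
      · push_cast; nlinarith [Nat.cast_nonneg (α := ℝ) d]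
  · -- m ≥ 8
    have hm8' : (8:ℤ) ≤ (m:ℤ) := by exact_mod_cast hm8
    rcases lt_or_ge N 340 with hNs | hNb
    · -- small N : table
      set n : ℕ := N.toNat with hn
      have hNn : (n : ℤ) = N := Int.toNat_of_nonneg (by linarith)
      have hn2 : 2 ≤ n := by omega
      have hn340 : n < 340 := by omega
      obtain ⟨K, kr, Ar, g, hK2, hK7, hKrg, hkr, hg, h1, h2, h3, h4⟩ :
          ∃ K kr Ar g : ℕ, 2 ≤ K ∧ K ≤ 7 ∧ K = kr * g ∧ 0 < kr ∧ 0 < g ∧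
            Ar ^ 2 ≤ kr ^ 2 * n ∧
            16 * Ar ^ 2 ≤ 15 * kr ^ 2 * n + 2 * Ar ∧
            64 * Ar ^ 2 + 2 ≤ 58 * kr ^ 2 * n + 16 * Ar ∧
            (2 + K * (K - 1)) * n ≤ (g * Ar) ^ 2 := by
        have hp := sesTable_ok n hn340 hn2
        exact ⟨(sesTable n).1, (sesTable n).2.1, (sesTable n).2.2.1, (sesTable n).2.2.2, hp⟩
      have harith : (Ar : ℤ) * m ≤ (kr : ℤ) * d := by
        refine ses_arith n kr Ar (by exact_mod_cast hkr) (by positivity) ?_ ?_ ?_ d m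
          (by positivity) hm8' (by rw [hNn]; exact hdm)
        · exact_mod_cast h1
        · exact_mod_cast h2
        · exact_mod_cast h3
      have hfull : ((g * Ar : ℕ) : ℤ) * m ≤ (K : ℤ) * d := by
        have hgz : (0:ℤ) ≤ (g:ℤ) := by positivity
        have hmul := mul_le_mul_of_nonneg_left harith hgz
        have hKc : (K:ℤ) = (kr:ℤ) * (g:ℤ) := by exact_mod_cast congrArg (Nat.cast : ℕ → ℤ) hKrg
        push_cast
        push_cast at hmul
        nlinarith
      have hAnn : (0:ℤ) ≤ ((g * Ar : ℕ) : ℤ) := by positivity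
      interval_cases K
      · refine le_trans (min_le_left _ _) (ses_term_le (4 * (N:ℝ)) ((g*Ar : ℕ) : ℤ) hAnn ?_ 2 (by norm_num) d m hm ?_)
        · rw [← hNn]
          have h4' : 4 * n ≤ (g * Ar) ^ 2 := by omega
          exact_mod_cast h4'
        · exact_mod_cast hfull
      · refine le_trans ((min_le_right _ _).trans (min_le_left _ _)) (ses_term_le (8 * (N:ℝ)) ((g*Ar : ℕ) : ℤ) hAnn ?_ 3 (by norm_num) d m hm ?_)
        · rw [← hNn]
          have h4' : 8 * n ≤ (g * Ar) ^ 2 := by omega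
          exact_mod_cast h4'
        · exact_mod_cast hfull
      · refine le_trans ((min_le_right _ _).trans ((min_le_right _ _).trans (min_le_left _ _))) (ses_term_le (14 * (N:ℝ)) ((g*Ar : ℕ) : ℤ) hAnn ?_ 4 (by norm_num) d m hm ?_)
        · rw [← hNn]
          have h4' : 14 * n ≤ (g * Ar) ^ 2 := by omega
          exact_mod_cast h4'
        · exact_mod_cast hfull
      · refine le_trans ((min_le_right _ _).trans ((min_le_right _ _).trans ((min_le_right _ _).trans (min_le_left _ _)))) (ses_term_le (22 * (N:ℝ)) ((g*Ar : ℕ) : ℤ) hAnn ?_ 5 (by norm_num) d m hm ?_)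
        · rw [← hNn]
          have h4' : 22 * n ≤ (g * Ar) ^ 2 := by omega
          exact_mod_cast h4'
        · exact_mod_cast hfull
      · refine le_trans ((min_le_right _ _).trans ((min_le_right _ _).trans ((min_le_right _ _).trans ((min_le_right _ _).trans (min_le_left _ _))))) (ses_term_le (32 * (N:ℝ)) ((g*Ar : ℕ) : ℤ) hAnn ?_ 6 (by norm_num) d m hm ?_)
        · rw [← hNn]
          have h4' : 32 * n ≤ (g * Ar) ^ 2 := by omega
          exact_mod_cast h4'
        · exact_mod_cast hfull
      · refine le_trans ((min_le_right _ _).trans ((min_le_right _ _).trans ((min_le_right _ _).trans ((min_le_right _ _).trans (min_le_right _ _))))) (ses_term_le (44 * (N:ℝ)) ((g*Ar : ℕ) : ℤ) hAnn ?_ 7 (by norm_num) d m hm ?_)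
        · rw [← hNn]
          have h4' : 44 * n ≤ (g * Ar) ^ 2 := by omega
          exact_mod_cast h4'
        · exact_mod_cast hfull
    · -- big N : k = 6
      obtain ⟨r, hr0, hrle, hrgt⟩ : ∃ r : ℤ, 0 ≤ r ∧ r ^ 2 ≤ 32 * N ∧ 32 * N < (r + 1) ^ 2 := by
        have h32 : (0:ℤ) ≤ 32 * N := by linarith
        have h3' : ((32 * N).toNat : ℤ) = 32 * N := Int.toNat_of_nonneg h32
        refine ⟨(Nat.sqrt (32 * N).toNat : ℤ), by positivity, ?_, ?_⟩
        · have h2' : Nat.sqrt (32 * N).toNat ^ 2 ≤ (32 * N).toNat := Nat.sqrt_le' _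
          have := (Nat.cast_le (α := ℤ)).mpr h2'
          push_cast at this
          rw [h3'] at this
          exact_mod_cast this
        · have h2' : (32 * N).toNat < ((32 * N).toNat.sqrt.succ) ^ 2 := Nat.lt_succ_sqrt' _
          have := (Nat.cast_lt (α := ℤ)).mpr h2'
          push_cast at this
          rw [h3'] at this
          exact_mod_cast this
      have hkey : 16 * r + 8 ≤ 5 * N := by
        by_contra hcon
        push_neg at hcon
        have h5 : 0 ≤ 5 * N - 7 := by linarith
        have h6 : 5 * N - 7 ≤ 16 * r := by linarith
        nlinarith [mul_le_mul h6 h6 h5 (by linarith : (0:ℤ) ≤ 16 * r)]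
      have hA2 : 8 * (r + 1) ^ 2 ≤ 261 * N := by nlinarith
      have hbig : ((r + 1) * m) ^ 2 ≤ (6 * (d:ℤ)) ^ 2 := by
        have hq : 8 * ((r+1)^2 * (m:ℤ)^2) ≤ 8 * (36 * (N * (2 + (m:ℤ) * ((m:ℤ) - 1)))) := by
          nlinarith [mul_nonneg (by linarith : (0:ℤ) ≤ N)
            (mul_nonneg (by linarith : (0:ℤ) ≤ (m:ℤ) - 8) (by linarith : (0:ℤ) ≤ 27 * (m:ℤ) - 72))]
        nlinarith
      have hfin : (r + 1) * m ≤ 6 * (d:ℤ) :=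
        ses_sq_le _ _ (mul_nonneg (by linarith) (by positivity)) (by positivity) hbig
      refine le_trans ((min_le_right _ _).trans ((min_le_right _ _).trans ((min_le_right _ _).trans ((min_le_right _ _).trans (min_le_left _ _))))) (ses_term_le (32 * (N:ℝ)) (r + 1) (by linarith) ?_ 6 (by norm_num) d m hm ?_)
      · exact_mod_cast le_of_lt hrgt
      · exact_mod_cast hfin
end

section
/- For every real number N ≥ 1072 and every real number m ≥ 8, one has √(N·(2 + m·(m−1)))/m ≥ √(44N)/7 + 1/7. -/
theorem stmt_4 (N m : ℝ) (hN : 1072 ≤ N) (hm : 8 ≤ m) :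
    Real.sqrt (N * (2 + m * (m - 1))) / m ≥ Real.sqrt (44 * N) / 7 + 1 / 7 := by
  have hm0 : (0:ℝ) < m := by linarith
  have hN0 : (0:ℝ) ≤ N := by linarith
  have hq : (0:ℝ) ≤ 2 + m * (m - 1) := by nlinarith [mul_nonneg (by linarith : (0:ℝ) ≤ m) (by linarith : (0:ℝ) ≤ m - 1)]
  have harg : (0:ℝ) ≤ N * (2 + m * (m - 1)) := mul_nonneg hN0 hq
  -- Step 2: the m = 8 case
  have h1 : Real.sqrt (58*N) / 8 ≥ Real.sqrt (44 * N) / 7 + 1 / 7 := by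
    have ha : (Real.sqrt (58*N))^2 = 58*N := Real.sq_sqrt (by linarith)
    have hb : (Real.sqrt (44*N))^2 = 44*N := Real.sq_sqrt (by linarith)
    have ha0 : 0 ≤ Real.sqrt (58*N) := Real.sqrt_nonneg _
    have hb0 : 0 ≤ Real.sqrt (44*N) := Real.sqrt_nonneg _
    set a := Real.sqrt (58*N)
    set b := Real.sqrt (44*N)
    have hkey : 128*b ≤ 26*N - 64 := by
      nlinarith [mul_nonneg hN0 (by linarith : (0:ℝ) ≤ N - 1072), sq_nonneg b]
    have h2 : 8*b + 8 ≤ 7*a := by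
      nlinarith [sq_nonneg (7*a - 8*b - 8), sq_nonneg (7*a + 8*b + 8)]
    linarith
  -- Step 1: monotonicity in m
  have h3 : Real.sqrt (58*N) / 8 ≤ Real.sqrt (N * (2 + m * (m - 1))) / m := by
    rw [div_le_div_iff₀ (by norm_num) hm0]
    have e1 : Real.sqrt (58*N) * m = Real.sqrt (58*N*m^2) := by
      rw [Real.sqrt_mul (show (0:ℝ) ≤ 58*N by positivity) (m^2), Real.sqrt_sq hm0.le]
    have e2 : Real.sqrt (N * (2 + m * (m - 1))) * 8 =
        Real.sqrt (N * (2 + m * (m - 1)) * 64) := by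
      rw [Real.sqrt_mul harg 64, show (64:ℝ) = 8^2 by norm_num,
        Real.sqrt_sq (by norm_num : (0:ℝ) ≤ 8)]
    rw [e1, e2]
    apply Real.sqrt_le_sqrt
    nlinarith [mul_nonneg hN0 (by nlinarith : (0:ℝ) ≤ (m-8)*(3*m-8))]
  linarith
end
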